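/- Let n ∈ ℕ and let e : Fin n → ℕ be strictly increasing. Call a map M : Fin n → ℤ with values in {−1, 0, +1} compact if for any two distinct indices i, j with M(i) ≠ 0 and M(j) ≠ 0 one has |e(i) − e(j)| ≥ 2, and write ε(M) = Σ_i M(i)·2^{e(i)}. Then for compact M and K: (a) ε(M) = ε(K) if and only if M = K; and (b) if M ≠ K and i₀ is the largest index with M(i₀) ≠ K(i₀), then ε(M) > ε(K) if and only if M(i₀) > K(i₀). -/

import Mathlib

/-- A marking `M : Fin n → ℤ` (with values in `{−1, 0, +1}`) over a strictly increasing
sequence of exponents `e` is *compact* if any two distinct indices carrying nonzero marks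
have exponents differing by at least 2. -/
def IsCompactMarking {n : ℕ} (e : Fin n → ℕ) (M : Fin n → ℤ) : Prop :=
  (∀ i, M i = -1 ∨ M i = 0 ∨ M i = 1) ∧
  ∀ i j : Fin n, i ≠ j → M i ≠ 0 → M j ≠ 0 → 2 ≤ |(e i : ℤ) - (e j : ℤ)|

lemma compactC {n : ℕ} (e : Fin n → ℕ) (M : Fin n → ℤ)
    (hM : IsCompactMarking e M) :
    ∀ b : ℕ, ∀ s : Finset (Fin n), (∀ j ∈ s, M j ≠ 0 → e j + 2 ≤ b) →
      3 * |∑ j ∈ s, M j * 2 ^ e j| < 2 ^ b := by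
  intro b
  induction b using Nat.strong_induction_on with
  | _ b ih =>
    intro s hs
    have hsum : ∑ j ∈ s, M j * 2 ^ e j
        = ∑ j ∈ s.filter (fun j => M j ≠ 0), M j * 2 ^ e j := by
      rw [Finset.sum_filter_of_ne]
      intro j _ h h0
      exact h (by rw [h0]; ring)
    rw [hsum]
    set s' := s.filter (fun j => M j ≠ 0) with hs'
    rcases s'.eq_empty_or_nonempty with h | hne
    · rw [h]; simpa using pow_pos (by norm_num : (0:ℤ) < 2) b
    · obtain ⟨j, hjs, hjmax⟩ := s'.exists_max_image e hne
      have hjmem := Finset.mem_filter.mp hjs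
      have hjne : M j ≠ 0 := hjmem.2
      have hab : e j + 2 ≤ b := hs j hjmem.1 hjne
      have hrest : ∀ j' ∈ s'.erase j, M j' ≠ 0 → e j' + 2 ≤ e j := by
        intro j' hj' _
        have hj'mem := Finset.mem_of_mem_erase hj'
        have hne' : j' ≠ j := Finset.ne_of_mem_erase hj'
        have hle : e j' ≤ e j := hjmax j' hj'mem
        have h2 := hM.2 j' j hne' (Finset.mem_filter.mp hj'mem).2 hjne
        rw [abs_sub_comm, abs_of_nonneg (sub_nonneg.mpr (by exact_mod_cast hle))] at h2
        omega
      have ihrest : 3 * |∑ j' ∈ s'.erase j, M j' * 2 ^ e j'| < 2 ^ (e j) :=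
        ih (e j) (by omega) _ hrest
      have hsplit : M j * 2 ^ e j + ∑ j' ∈ s'.erase j, M j' * 2 ^ e j'
          = ∑ j' ∈ s', M j' * 2 ^ e j' :=
        Finset.add_sum_erase s' (fun j' => M j' * 2 ^ e j') hjs
      have hMj : |M j| ≤ 1 := by rcases hM.1 j with h | h | h <;> simp [h]
      have habs : |∑ j' ∈ s', M j' * 2 ^ e j'|
          ≤ 2 ^ e j + |∑ j' ∈ s'.erase j, M j' * 2 ^ e j'| := by
        calc |∑ j' ∈ s', M j' * 2 ^ e j'|
            ≤ |M j * 2 ^ e j| + |∑ j' ∈ s'.erase j, M j' * 2 ^ e j'| := by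
              rw [← hsplit]; exact abs_add_le _ _
          _ ≤ 2 ^ e j + |∑ j' ∈ s'.erase j, M j' * 2 ^ e j'| := by
              gcongr
              rw [abs_mul, abs_pow, abs_two]
              nlinarith [pow_pos (by norm_num : (0:ℤ) < 2) (e j)]
      have h2b : (2:ℤ) ^ (e j + 2) ≤ 2 ^ b := pow_le_pow_right₀ (by norm_num) hab
      have : (2:ℤ) ^ (e j + 2) = 4 * 2 ^ e j := by ring
      linarith

lemma core {n : ℕ} (e : Fin n → ℕ) (he : StrictMono e)
    (M K : Fin n → ℤ) (hM : IsCompactMarking e M) (hK : IsCompactMarking e K)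
    (i₀ : Fin n) (h1 : K i₀ < M i₀) (h2 : ∀ j, M j ≠ K j → j ≤ i₀) :
    (∑ i, K i * 2 ^ e i) < ∑ i, M i * 2 ^ e i := by
  rw [← sub_pos, ← Finset.sum_sub_distrib]
  have hzero : ∀ j ∈ Finset.univ, j ∉ Finset.Iic i₀ →
      M j * 2 ^ e j - K j * 2 ^ e j = 0 := by
    intro j _ hj
    have : M j = K j := by
      by_contra h
      exact hj (Finset.mem_Iic.mpr (h2 j h))
    rw [this]; ring
  rw [← Finset.sum_subset (Finset.subset_univ (Finset.Iic i₀)) hzero]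
  rw [← Finset.Iio_insert, Finset.sum_insert (by simp : i₀ ∉ Finset.Iio i₀), Finset.sum_sub_distrib]
  -- bounds on the tails
  have key : ∀ (N : Fin n → ℤ), IsCompactMarking e N →
      (N i₀ ≠ 0 → 3 * |∑ j ∈ Finset.Iio i₀, N j * 2 ^ e j| < 2 ^ e i₀) ∧
      3 * |∑ j ∈ Finset.Iio i₀, N j * 2 ^ e j| < 2 ^ (e i₀ + 1) := by
    intro N hN
    constructor
    · intro hne
      apply compactC e N hN
      intro j hj hj0
      have hlt : j < i₀ := Finset.mem_Iio.mp hj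
      have h2' := hN.2 j i₀ (ne_of_lt hlt) hj0 hne
      have := he hlt
      rw [abs_sub_comm, abs_of_nonneg (sub_nonneg.mpr (by exact_mod_cast this.le))] at h2'
      omega
    · apply compactC e N hN
      intro j hj _
      have := he (Finset.mem_Iio.mp hj)
      omega
  obtain ⟨hM1, hM2⟩ := key M hM
  obtain ⟨hK1, hK2⟩ := key K hK
  set TM := ∑ j ∈ Finset.Iio i₀, M j * 2 ^ e j with hTM
  set TK := ∑ j ∈ Finset.Iio i₀, K j * 2 ^ e j with hTK
  have hpow : (0:ℤ) < 2 ^ e i₀ := by positivity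
  have hpow2 : (2:ℤ) ^ (e i₀ + 1) = 2 * 2 ^ e i₀ := by ring
  have haM := abs_le.mp (le_refl |TM|)
  have haK := abs_le.mp (le_refl |TK|)
  rcases hM.1 i₀ with hm | hm | hm <;> rcases hK.1 i₀ with hk | hk | hk <;>
      rw [hm, hk] at h1 ⊢ <;> omega

/-- Compact markings over a fixed strictly increasing exponent sequence are
uniquely determined by their values `ε(M) = Σ_i M(i)·2^{e(i)}`, and two distinct compact
markings compare according to the most significant digit at which they differ. -/
theorem compact_marking_unique_and_compare
    (n : ℕ) (e : Fin n → ℕ) (he : StrictMono e)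
    (M K : Fin n → ℤ) (hM : IsCompactMarking e M) (hK : IsCompactMarking e K) :
    ((∑ i, M i * 2 ^ e i) = (∑ i, K i * 2 ^ e i) ↔ M = K) ∧
    (∀ i₀ : Fin n, M i₀ ≠ K i₀ → (∀ j, M j ≠ K j → j ≤ i₀) →
      ((∑ i, K i * 2 ^ e i) < (∑ i, M i * 2 ^ e i) ↔ K i₀ < M i₀)) := by
  constructor
  · constructor
    · intro heq
      by_contra hne
      have : ∃ j, M j ≠ K j := by
        by_contra h
        push_neg at h
        exact hne (funext h)
      set s := Finset.univ.filter (fun j => M j ≠ K j) with hs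
      have hsne : s.Nonempty := by
        obtain ⟨j, hj⟩ := this
        exact ⟨j, Finset.mem_filter.mpr ⟨Finset.mem_univ j, hj⟩⟩
      set i₀ := s.max' hsne with hi₀
      have hmem : M i₀ ≠ K i₀ := (Finset.mem_filter.mp (s.max'_mem hsne)).2
      have hmax : ∀ j, M j ≠ K j → j ≤ i₀ := fun j hj =>
        s.le_max' j (Finset.mem_filter.mpr ⟨Finset.mem_univ j, hj⟩)
      rcases lt_or_gt_of_ne hmem with h | h
      · exact absurd heq (ne_of_lt (core e he K M hK hM i₀ h
          (fun j hj => hmax j (Ne.symm hj))))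
      · exact absurd heq (ne_of_gt (core e he M K hM hK i₀ h hmax))
    · rintro rfl; rfl
  · intro i₀ hne hmax
    constructor
    · intro hlt
      rcases lt_or_gt_of_ne hne with h | h
      · exact absurd hlt (not_lt.mpr (core e he K M hK hM i₀ h
          (fun j hj => hmax j (Ne.symm hj))).le)
      · exact h
    · intro h
      exact core e he M K hM hK i₀ h hmax
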